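/- Let k ≥ 1 be an integer, η > 0, s > 1 and R > 0. Then there exists a constant C = C(s, η) > 0 (independent of R) such that for every nonnegative finite Borel measure ν on ℝ^k and every x ∈ ℝ^k, ∫₀^{4R} ( ν(B(x,r)) r^{−η} )^{s} dr/r ≤ C ( ∫₀^{8R} ν(B(x,r)) r^{−η} dr/r )^{s}. -/

import Mathlib

open MeasureTheory Set Metric

/-- A Hedberg–Wolff-type inequality: the `s`-power Wolff-type integral
is dominated by the `s`-th power of the linear potential, with a constant depending only
on `s` and `η` (independent of `R`). -/
theorem stmt_11 (k : ℕ) (hk : 1 ≤ k) (η s : ℝ) (hη : 0 < η) (hs : 1 < s) :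
    ∃ C > 0, ∀ R : ℝ, 0 < R → ∀ ν : Measure (EuclideanSpace ℝ (Fin k)),
      IsFiniteMeasure ν → ∀ x : EuclideanSpace ℝ (Fin k),
      ∫⁻ r in Set.Ioc (0 : ℝ) (4 * R),
          (ν (ball x r) * ENNReal.ofReal (r ^ (-η))) ^ s * ENNReal.ofReal r⁻¹ ≤
        ENNReal.ofReal C * (∫⁻ r in Set.Ioc (0 : ℝ) (8 * R),
          ν (ball x r) * ENNReal.ofReal (r ^ (-η)) * ENNReal.ofReal r⁻¹) ^ s := by
  refine ⟨(2 ^ (η + 1) : ℝ) ^ (s - 1), by positivity, ?_⟩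
  intro R hR ν hν x
  set I := ∫⁻ r in Set.Ioc (0 : ℝ) (8 * R),
      ν (ball x r) * ENNReal.ofReal (r ^ (-η)) * ENNReal.ofReal r⁻¹ with hI
  have h2pos : (0 : ℝ) < 2 ^ (η + 1) := by positivity
  -- key pointwise estimate
  have key : ∀ r ∈ Set.Ioc (0 : ℝ) (4 * R),
      ν (ball x r) * ENNReal.ofReal (r ^ (-η)) ≤ ENNReal.ofReal (2 ^ (η + 1)) * I := by
    intro r hr
    obtain ⟨hr0, hr4⟩ := hr
    have hsub : Set.Ioc r (2 * r) ⊆ Set.Ioc (0 : ℝ) (8 * R) := fun t ht =>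
      ⟨hr0.trans ht.1, ht.2.trans (by linarith)⟩
    have h2 : (ν (ball x r) * ENNReal.ofReal ((2 * r) ^ (-η)) * ENNReal.ofReal (2 * r)⁻¹)
        * ENNReal.ofReal r ≤ I := by
      have hconst : ∫⁻ _ in Set.Ioc r (2 * r),
          (ν (ball x r) * ENNReal.ofReal ((2 * r) ^ (-η)) * ENNReal.ofReal (2 * r)⁻¹) =
          (ν (ball x r) * ENNReal.ofReal ((2 * r) ^ (-η)) * ENNReal.ofReal (2 * r)⁻¹)
            * ENNReal.ofReal r := by
        rw [setLIntegral_const, Real.volume_Ioc, show 2 * r - r = r by ring]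
      rw [← hconst]
      refine le_trans (setLIntegral_mono' measurableSet_Ioc ?_) (lintegral_mono_set hsub)
      intro t ht
      have ht0 : 0 < t := hr0.trans ht.1
      refine mul_le_mul' (mul_le_mul' ?_ ?_) ?_
      · exact measure_mono (ball_subset_ball ht.1.le)
      · exact ENNReal.ofReal_le_ofReal
          (Real.rpow_le_rpow_of_nonpos ht0 ht.2 (by linarith))
      · exact ENNReal.ofReal_le_ofReal (inv_anti₀ ht0 ht.2)
    have hre : (2 : ℝ) ^ (η + 1) * ((2 * r) ^ (-η)) * ((2 * r)⁻¹) * r = r ^ (-η) := by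
      have h1 : ((2 * r) : ℝ) ^ (-η) = 2 ^ (-η) * r ^ (-η) :=
        Real.mul_rpow (by norm_num) hr0.le
      have h2' : (2 : ℝ) ^ (η + 1) * 2 ^ (-η) = 2 := by
        rw [← Real.rpow_add two_pos]; norm_num
      have h3 : ((2 * r) : ℝ)⁻¹ * r = 2⁻¹ := by field_simp
      calc (2 : ℝ) ^ (η + 1) * ((2 * r) ^ (-η)) * ((2 * r)⁻¹) * r
          = (2 ^ (η + 1) * 2 ^ (-η)) * r ^ (-η) * ((2 * r)⁻¹ * r) := by rw [h1]; ring
        _ = 2 * r ^ (-η) * 2⁻¹ := by rw [h2', h3]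
        _ = r ^ (-η) := by ring
    calc ν (ball x r) * ENNReal.ofReal (r ^ (-η))
        = ν (ball x r) *
            ENNReal.ofReal (2 ^ (η + 1) * ((2 * r) ^ (-η)) * ((2 * r)⁻¹) * r) := by
          rw [hre]
      _ = ENNReal.ofReal (2 ^ (η + 1)) *
          (ν (ball x r) * ENNReal.ofReal ((2 * r) ^ (-η)) * ENNReal.ofReal (2 * r)⁻¹
            * ENNReal.ofReal r) := by
          rw [ENNReal.ofReal_mul (by positivity), ENNReal.ofReal_mul (by positivity),
            ENNReal.ofReal_mul (by positivity)]
          ring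
      _ ≤ ENNReal.ofReal (2 ^ (η + 1)) * I := by
          exact mul_le_mul_right h2 _
  rcases eq_or_ne I ⊤ with hItop | hItop
  · rw [hItop, ENNReal.top_rpow_of_pos (by linarith), ENNReal.mul_top
      (by simp [ENNReal.ofReal_eq_zero]; positivity)]
    exact le_top
  rcases eq_or_ne I 0 with hI0 | hI0
  · have hz : ∀ r ∈ Set.Ioc (0 : ℝ) (4 * R),
        (ν (ball x r) * ENNReal.ofReal (r ^ (-η))) ^ s * ENNReal.ofReal r⁻¹ ≤ 0 := by
      intro r hr
      have := key r hr
      rw [hI0, mul_zero, le_zero_iff] at this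
      rw [this, ENNReal.zero_rpow_of_pos (by linarith), zero_mul]
    calc ∫⁻ r in Set.Ioc (0 : ℝ) (4 * R),
          (ν (ball x r) * ENNReal.ofReal (r ^ (-η))) ^ s * ENNReal.ofReal r⁻¹
        ≤ ∫⁻ _ in Set.Ioc (0 : ℝ) (4 * R), 0 := setLIntegral_mono' measurableSet_Ioc hz
      _ = 0 := by simp
      _ ≤ _ := zero_le
  -- main case : 0 < I < ⊤
  have hb : ENNReal.ofReal (2 ^ (η + 1)) * I ≠ ⊤ :=
    ENNReal.mul_ne_top ENNReal.ofReal_ne_top hItop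
  have hpt : ∀ r ∈ Set.Ioc (0 : ℝ) (4 * R),
      (ν (ball x r) * ENNReal.ofReal (r ^ (-η))) ^ s * ENNReal.ofReal r⁻¹ ≤
        (ENNReal.ofReal (2 ^ (η + 1)) * I) ^ (s - 1) *
          (ν (ball x r) * ENNReal.ofReal (r ^ (-η)) * ENNReal.ofReal r⁻¹) := by
    intro r hr
    have hab := key r hr
    rcases eq_or_ne (ν (ball x r) * ENNReal.ofReal (r ^ (-η))) 0 with h0 | h0
    · simp [h0, ENNReal.zero_rpow_of_pos (show (0:ℝ) < s by linarith)]
    have hatop : ν (ball x r) * ENNReal.ofReal (r ^ (-η)) ≠ ⊤ := ne_top_of_le_ne_top hb hab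
    have hsplit : (ν (ball x r) * ENNReal.ofReal (r ^ (-η))) ^ s =
        (ν (ball x r) * ENNReal.ofReal (r ^ (-η))) ^ (s - 1) *
          (ν (ball x r) * ENNReal.ofReal (r ^ (-η))) := by
      have := (ENNReal.rpow_add (s - 1) 1 h0 hatop).symm
      rw [ENNReal.rpow_one] at this
      rw [this]
      norm_num
    rw [hsplit, mul_assoc, mul_assoc]
    exact mul_le_mul_left (ENNReal.rpow_le_rpow hab (by linarith)) _
  calc ∫⁻ r in Set.Ioc (0 : ℝ) (4 * R),
        (ν (ball x r) * ENNReal.ofReal (r ^ (-η))) ^ s * ENNReal.ofReal r⁻¹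
      ≤ ∫⁻ r in Set.Ioc (0 : ℝ) (4 * R),
          (ENNReal.ofReal (2 ^ (η + 1)) * I) ^ (s - 1) *
            (ν (ball x r) * ENNReal.ofReal (r ^ (-η)) * ENNReal.ofReal r⁻¹) :=
        setLIntegral_mono' measurableSet_Ioc hpt
    _ = (ENNReal.ofReal (2 ^ (η + 1)) * I) ^ (s - 1) *
          ∫⁻ r in Set.Ioc (0 : ℝ) (4 * R),
            ν (ball x r) * ENNReal.ofReal (r ^ (-η)) * ENNReal.ofReal r⁻¹ :=
        lintegral_const_mul' _ _ (ENNReal.rpow_ne_top_of_nonneg (by linarith) hb)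
    _ ≤ (ENNReal.ofReal (2 ^ (η + 1)) * I) ^ (s - 1) * I := by
        gcongr
        exact lintegral_mono_set (Set.Ioc_subset_Ioc le_rfl (by linarith))
    _ = ENNReal.ofReal ((2 ^ (η + 1) : ℝ) ^ (s - 1)) * I ^ s := by
        rw [ENNReal.mul_rpow_of_nonneg _ _ (by linarith),
          ← ENNReal.ofReal_rpow_of_pos h2pos, mul_assoc]
        congr 1
        have := (ENNReal.rpow_add (s - 1) 1 hI0 hItop).symm
        rw [ENNReal.rpow_one] at this
        rw [this]
        norm_num
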